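/- arXiv:2105.01769 — 3 statements merged into one kernel-verified Lean document; each statement's English description precedes it below -/
import Mathlib

section
/- Suppose the connectedness condition holds: for every pair (i,j) with 1 ≤ i ≤ N and 1 ≤ j ≤ J there exist indices 1 ≤ i_1,…,i_k ≤ N and 1 ≤ j_1,…,j_k ≤ J such that z_{i,j_1} = z_{i_1,j_1} = z_{i_1,j_2} = z_{i_2,j_2} = … = z_{i_k,j_k} = z_{i_k,j} = 1. Then the vectors θ ∈ ℝ^N and β ∈ ℝ^J are uniquely determined by the equations Σ_{i=1}^N θ_i = 0 and θ_i − β_j = m_{ij} for all pairs (i,j) with z_{ij} = 1. -/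
open Filter Finset MeasureTheory

noncomputable section

/-- The logistic function `t ↦ eᵗ/(1+eᵗ)`. -/
def logisticFn (t : ℝ) : ℝ := Real.exp t / (1 + Real.exp t)

/-- The Bernoulli variance `σ²(t) = eᵗ/(1+eᵗ)²` as a function of the logit `t`. -/
def varFn (t : ℝ) : ℝ := Real.exp t / (1 + Real.exp t) ^ 2

/-- Number of observed entries in row `i`, i.e. `Σ_{j<J} z_{ij}`. -/
def rowCount (J : ℕ) (z : ℕ → ℕ → Bool) (i : ℕ) : ℕ :=
  ((Finset.range J).filter fun j => z i j = true).card

/-- Number of observed entries in column `j`, i.e. `Σ_{i<N} z_{ij}`. -/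
def colCount (N : ℕ) (z : ℕ → ℕ → Bool) (j : ℕ) : ℕ :=
  ((Finset.range N).filter fun i => z i j = true).card

/-- `J_*`: the minimal number of observed entries per row. -/
def Jlow (N J : ℕ) (z : ℕ → ℕ → Bool) : ℕ := sInf (rowCount J z '' Set.Iio N)

/-- `J^*`: the maximal number of observed entries per row. -/
def Jhigh (N J : ℕ) (z : ℕ → ℕ → Bool) : ℕ := (Finset.range N).sup (rowCount J z)

/-- `N_*`: the minimal number of observed entries per column. -/
def Nlow (N J : ℕ) (z : ℕ → ℕ → Bool) : ℕ := sInf (colCount N z '' Set.Iio J)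

/-- `N^*`: the maximal number of observed entries per column. -/
def Nhigh (N J : ℕ) (z : ℕ → ℕ → Bool) : ℕ := (Finset.range J).sup (colCount N z)

/-- Total number of observed entries. -/
def obsCard (N J : ℕ) (z : ℕ → ℕ → Bool) : ℕ := ∑ i ∈ Finset.range N, rowCount J z i

/-- The connectedness chain between row `i` and column `j`:
there are `i₁,…,i_k < N` and `j₁,…,j_k < J` with
`z_{i,j₁} = z_{i₁,j₁} = z_{i₁,j₂} = z_{i₂,j₂} = ⋯ = z_{i_k,j_k} = z_{i_k,j} = 1`. -/
def ConnectedPair (N J : ℕ) (z : ℕ → ℕ → Bool) (i j : ℕ) : Prop :=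
  ∃ k : ℕ, 1 ≤ k ∧ ∃ I Jc : ℕ → ℕ,
    (∀ l, 1 ≤ l → l ≤ k → I l < N ∧ Jc l < J) ∧
    z i (Jc 1) = true ∧
    (∀ l, 1 ≤ l → l ≤ k → z (I l) (Jc l) = true) ∧
    (∀ l, 1 ≤ l → l + 1 ≤ k → z (I l) (Jc (l + 1)) = true) ∧
    z (I k) j = true

/-- Condition 3 (connectedness of the observed pattern). -/
def Cond3 (N J : ℕ) (z : ℕ → ℕ → Bool) : Prop :=
  ∀ i < N, ∀ j < J, ConnectedPair N J z i j

/-- Condition 1, for a triangular array of missingness patterns indexed by `N`. -/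
def Cond1 (Jn : ℕ → ℕ) (z : ℕ → ℕ → ℕ → Bool) : Prop :=
  (∃ k : ℝ, 0 < k ∧ ∀ N : ℕ,
      k * (N : ℝ) ^ ((2 : ℝ) / 3) ≤ (Nlow N (Jn N) (z N) : ℝ) ∧
      k * (Jn N : ℝ) ^ ((2 : ℝ) / 3) ≤ (Jlow N (Jn N) (z N) : ℝ)) ∧
  Tendsto (fun N : ℕ => Real.log N / (Jlow N (Jn N) (z N) : ℝ)) atTop (nhds 0) ∧
  (∃ k₁ k₂ : ℝ, 0 < k₁ ∧ 0 < k₂ ∧ ∀ N : ℕ,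
      k₁ * (Jlow N (Jn N) (z N) : ℝ) ≤ (Jhigh N (Jn N) (z N) : ℝ) ∧
      (Jhigh N (Jn N) (z N) : ℝ) ≤ k₂ * (Jlow N (Jn N) (z N) : ℝ))

/-- Condition 2 (uniform boundedness of the true parameters). -/
def Cond2 (Jn : ℕ → ℕ) (θs βs : ℕ → ℕ → ℝ) : Prop :=
  ∃ c : ℝ, ∀ N : ℕ, (∀ i < N, |θs N i| < c) ∧ (∀ j < Jn N, |βs N j| < c)

/-- The Bernoulli 1-bit observation model: `Y N i j` are 0/1-valued, independent (for each `N`),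
with success probability given by the logistic function of `θ*_i − β*_j`. -/
def BernModel {Ω' : Type*} [MeasurableSpace Ω'] (μ : Measure Ω') (Jn : ℕ → ℕ)
    (θs βs : ℕ → ℕ → ℝ) (Y : ℕ → ℕ → ℕ → Ω' → ℝ) : Prop :=
  (∀ N i j, Measurable (Y N i j)) ∧
  (∀ N i j ω, Y N i j ω = 0 ∨ Y N i j ω = 1) ∧
  (∀ N : ℕ, ∀ i < N, ∀ j < Jn N,
      μ {ω | Y N i j ω = 1} = ENNReal.ofReal (logisticFn (θs N i - βs N j))) ∧
  (∀ N : ℕ, ProbabilityTheory.iIndepFun (m := fun _ : ℕ × ℕ => Real.measurableSpace)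
      (fun p : ℕ × ℕ => Y N p.1 p.2) μ)

/-- The log-likelihood `l(θ, β) = Σ_{z_{ij}=1} [Y_{ij}(θ_i − β_j) − log(1 + exp(θ_i − β_j))]`. -/
def loglik (N J : ℕ) (z : ℕ → ℕ → Bool) (Y : ℕ → ℕ → ℝ) (p : (ℕ → ℝ) × (ℕ → ℝ)) : ℝ :=
  ∑ i ∈ Finset.range N, ∑ j ∈ Finset.range J,
    if z i j = true then Y i j * (p.1 i - p.2 j) - Real.log (1 + Real.exp (p.1 i - p.2 j)) else 0

/-- `(θ, β)` is a maximum likelihood estimate: it maximizes the log-likelihood over the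
constraint set `Σ_{i<N} θ_i = 0`. -/
def IsMLE (N J : ℕ) (z : ℕ → ℕ → Bool) (Y : ℕ → ℕ → ℝ) (θ β : ℕ → ℝ) : Prop :=
  (∑ i ∈ Finset.range N, θ i) = 0 ∧
  IsMaxOn (loglik N J z Y) {p : (ℕ → ℝ) × (ℕ → ℝ) | (∑ i ∈ Finset.range N, p.1 i) = 0} (θ, β)

/-- `X_N = O_p(a_N)`: boundedness in probability at rate `a_N`. -/
def IsBigOp {Ω' : Type*} [MeasurableSpace Ω'] (μ : Measure Ω') (X : ℕ → Ω' → ℝ)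
    (a : ℕ → ℝ) : Prop :=
  ∀ ε : ℝ, 0 < ε → ∃ K : ℝ, 0 < K ∧
    ∀ᶠ N in atTop, μ {ω | K * a N < |X N ω|} < ENNReal.ofReal ε

/-- `max_{i<n} |g i|`. -/
def supAbs (n : ℕ) (g : ℕ → ℝ) : ℝ := sSup ((fun i => |g i|) '' Set.Iio n)

/-- `max_{i<n, j<m} |g i j|`. -/
def supAbs2 (n m : ℕ) (g : ℕ → ℕ → ℝ) : ℝ :=
  sSup ((fun p : ℕ × ℕ => |g p.1 p.2|) '' (Set.Iio n ×ˢ Set.Iio m))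

/-- The space `Ω_N` of vectors of observed entries of the form `x_{ij} = θ_i − β_j`
with `Σ_{i<N} θ_i = 0` (represented as functions, only the observed entries matter). -/
def OmegaSp (N J : ℕ) (z : ℕ → ℕ → Bool) : Set (ℕ → ℕ → ℝ) :=
  {x | ∃ θ β : ℕ → ℝ, (∑ i ∈ Finset.range N, θ i) = 0 ∧
    ∀ i < N, ∀ j < J, z i j = true → x i j = θ i - β j}

/-- The variance-weighted inner product `[x, y]_σ = Σ_{z_{ij}=1} x_{ij} σ_{ij}² y_{ij}`. -/
def ipSig (N J : ℕ) (z : ℕ → ℕ → Bool) (s : ℕ → ℕ → ℝ) (x y : ℕ → ℕ → ℝ) : ℝ :=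
  ∑ i ∈ Finset.range N, ∑ j ∈ Finset.range J, if z i j = true then x i j * s i j * y i j else 0

/-- The norm `‖x‖_σ`. -/
def normSig (N J : ℕ) (z : ℕ → ℕ → Bool) (s : ℕ → ℕ → ℝ) (x : ℕ → ℕ → ℝ) : ℝ :=
  Real.sqrt (ipSig N J z s x x)

/-- A linear functional on `Ω_N` with coefficients `w`: `g(x) = Σ_{z_{ij}=1} w_{ij} x_{ij}`. -/
def applyW (N J : ℕ) (z : ℕ → ℕ → Bool) (w x : ℕ → ℕ → ℝ) : ℝ :=
  ∑ i ∈ Finset.range N, ∑ j ∈ Finset.range J, if z i j = true then w i j * x i j else 0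

/-- `σ(g) = sup{|g(x)| : x ∈ Ω_N, ‖x‖_σ ≤ 1}`. -/
def sigOf (N J : ℕ) (z : ℕ → ℕ → Bool) (s : ℕ → ℕ → ℝ) (w : ℕ → ℕ → ℝ) : ℝ :=
  sSup ((fun x => |applyW N J z w x|) '' {x | x ∈ OmegaSp N J z ∧ normSig N J z s x ≤ 1})

/-- `‖x‖_σ(A)`: the smallest `c ≥ 0` with `|g(x)| ≤ c σ(g)` for all `g ∈ A`. -/
def normOn (N J : ℕ) (z : ℕ → ℕ → Bool) (s : ℕ → ℕ → ℝ) (A : Set (ℕ → ℕ → ℝ))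
    (x : ℕ → ℕ → ℝ) : ℝ :=
  sInf {c : ℝ | 0 ≤ c ∧ ∀ w ∈ A, |applyW N J z w x| ≤ c * sigOf N J z s w}

/-- The matrix of Bernoulli variances `σ_{ij}² = varFn (θ_i − β_j)`. -/
def sigMat (θ β : ℕ → ℝ) : ℕ → ℕ → ℝ := fun i j => varFn (θ i - β j)

/-- Row sums `σ_{i+}² = Σ_j z_{ij} σ_{ij}²`. -/
def sRow (J : ℕ) (z : ℕ → ℕ → Bool) (s : ℕ → ℕ → ℝ) (i : ℕ) : ℝ :=
  ∑ j ∈ Finset.range J, if z i j = true then s i j else 0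

/-- Column sums `σ_{+j}² = Σ_i z_{ij} σ_{ij}²`. -/
def sCol (N : ℕ) (z : ℕ → ℕ → Bool) (s : ℕ → ℕ → ℝ) (j : ℕ) : ℝ :=
  ∑ i ∈ Finset.range N, if z i j = true then s i j else 0

/-- `σ_{++}² = Σ_{z_{ij}=1} σ_{ij}²`. -/
def sTot (N J : ℕ) (z : ℕ → ℕ → Bool) (s : ℕ → ℕ → ℝ) : ℝ :=
  ∑ i ∈ Finset.range N, sRow J z s i

/-- `w_{i+} = Σ_{j : z_{ij}=1} w_{ij}`. -/
def wRow (J : ℕ) (z : ℕ → ℕ → Bool) (w : ℕ → ℕ → ℝ) (i : ℕ) : ℝ :=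
  ∑ j ∈ Finset.range J, if z i j = true then w i j else 0

/-- `w_{+j} = Σ_{i : z_{ij}=1} w_{ij}`. -/
def wCol (N : ℕ) (z : ℕ → ℕ → Bool) (w : ℕ → ℕ → ℝ) (j : ℕ) : ℝ :=
  ∑ i ∈ Finset.range N, if z i j = true then w i j else 0

/-- `w_{++} = Σ_{z_{ij}=1} w_{ij}`. -/
def wTot (N J : ℕ) (z : ℕ → ℕ → Bool) (w : ℕ → ℕ → ℝ) : ℝ :=
  ∑ i ∈ Finset.range N, wRow J z w i

/-- `U = U_N(y, v)`: the element of `Ω_N` defined by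
`[x, U]_σ = Σ_{z_{ij}=1} x_{ij} (σ²(y_{ij}) − σ_{ij}²) v_{ij}` for all `x ∈ Ω_N`. -/
def IsU (N J : ℕ) (z : ℕ → ℕ → Bool) (s : ℕ → ℕ → ℝ) (y v U : ℕ → ℕ → ℝ) : Prop :=
  U ∈ OmegaSp N J z ∧ ∀ x ∈ OmegaSp N J z,
    ipSig N J z s x U = ∑ i ∈ Finset.range N, ∑ j ∈ Finset.range J,
      if z i j = true then x i j * (varFn (y i j) - s i j) * v i j else 0

/-- `R = R_N`: the element of `Ω_N` defined by
`[x, R]_σ = Σ_{z_{ij}=1} x_{ij} (Y_{ij} − E_{ij})` for all `x ∈ Ω_N`. -/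
def IsR (N J : ℕ) (z : ℕ → ℕ → Bool) (s : ℕ → ℕ → ℝ) (E Yo R : ℕ → ℕ → ℝ) : Prop :=
  R ∈ OmegaSp N J z ∧ ∀ x ∈ OmegaSp N J z,
    ipSig N J z s x R = ∑ i ∈ Finset.range N, ∑ j ∈ Finset.range J,
      if z i j = true then x i j * (Yo i j - E i j) else 0

/-- The coefficient array `w` represents the linear functional
`(θ_i − β_j : z_{ij} = 1) ↦ g(θ, β)` on `Ω_N`. -/
def RepFunc (N J : ℕ) (z : ℕ → ℕ → Bool) (w : ℕ → ℕ → ℝ)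
    (g : (ℕ → ℝ) → (ℕ → ℝ) → ℝ) : Prop :=
  ∀ θ β : ℕ → ℝ, (∑ i ∈ Finset.range N, θ i) = 0 →
    applyW N J z w (fun i j => θ i - β j) = g θ β

/-- Coefficients of the point-evaluation functional `f_{ij}(x) = x_{ij}`. -/
def pointW (i j : ℕ) : ℕ → ℕ → ℝ := fun i' j' => if i' = i ∧ j' = j then 1 else 0

/-- The set `A_p` of point-evaluation functionals at observed entries. -/
def Apoint (N J : ℕ) (z : ℕ → ℕ → Bool) : Set (ℕ → ℕ → ℝ) :=
  {w | ∃ i < N, ∃ j < J, z i j = true ∧ w = pointW i j}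

/-- The set `A_β` of (coefficient arrays of) the functionals `g_j(x) = β_j`, `j < J`. -/
def Abeta (N J : ℕ) (z : ℕ → ℕ → Bool) : Set (ℕ → ℕ → ℝ) :=
  {w | ∃ j < J, RepFunc N J z w fun _ β => β j}

/-- The set `A_θ` of (coefficient arrays of) the functionals `g_i(x) = θ_i`, `i < N`. -/
def Atheta (N J : ℕ) (z : ℕ → ℕ → Bool) : Set (ℕ → ℕ → ℝ) :=
  {w | ∃ i < N, RepFunc N J z w fun θ _ => θ i}

end
/-- **Proposition 1, part 1.** Under the connectedness condition, `θ` and `β` are uniquely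
determined by `Σ_{i<N} θ_i = 0` and `θ_i − β_j = m_{ij}` for all observed `(i,j)`. -/
theorem uniqueness_of_parameters_of_connected
    (N J : ℕ) (hN : 1 ≤ N) (hJ : 1 ≤ J) (z : ℕ → ℕ → Bool) (m : ℕ → ℕ → ℝ)
    (hconsist : ∃ θ₀ β₀ : ℕ → ℝ, ∀ i < N, ∀ j < J, z i j = true → m i j = θ₀ i - β₀ j)
    (hconn : ∀ i < N, ∀ j < J, ConnectedPair N J z i j)
    (θ θ' β β' : ℕ → ℝ)
    (hθ : (∑ i ∈ Finset.range N, θ i) = 0)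
    (hθ' : (∑ i ∈ Finset.range N, θ' i) = 0)
    (hsol : ∀ i < N, ∀ j < J, z i j = true → θ i - β j = m i j)
    (hsol' : ∀ i < N, ∀ j < J, z i j = true → θ' i - β' j = m i j) :
    (∀ i < N, θ i = θ' i) ∧ (∀ j < J, β j = β' j) := by
  have key : ∀ i < N, ∀ j < J, z i j = true → θ i - θ' i = β j - β' j := by
    intro i hi j hj hz
    have h1 := hsol i hi j hj hz
    have h2 := hsol' i hi j hj hz
    linarith
  have chainEq : ∀ i < N, ∀ j < J, θ i - θ' i = β j - β' j := by
    intro i hi j hj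
    obtain ⟨k, hk, I, Jc, hIJ, hz0, hz1, hz2, hz3⟩ := hconn i hi j hj
    have step : ∀ l, 1 ≤ l → l ≤ k → θ (I l) - θ' (I l) = θ i - θ' i := by
      intro l
      induction l with
      | zero => omega
      | succ n ih =>
        intro _ hle
        by_cases hn : n = 0
        · subst hn
          have hb := hIJ 1 le_rfl hle
          have e1 := key i hi (Jc 1) hb.2 hz0
          have e2 := key (I 1) hb.1 (Jc 1) hb.2 (hz1 1 le_rfl hle)
          linarith
        · have hn1 : 1 ≤ n := by omega
          have hnk : n ≤ k := by omega
          have ihh := ih hn1 hnk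
          have hb := hIJ (n + 1) (by omega) hle
          have hbn := hIJ n hn1 hnk
          have e1 := key (I n) hbn.1 (Jc (n + 1)) hb.2 (hz2 n hn1 hle)
          have e2 := key (I (n + 1)) hb.1 (Jc (n + 1)) hb.2 (hz1 (n + 1) (by omega) hle)
          linarith
    have hk' := step k hk le_rfl
    have hbk := hIJ k hk le_rfl
    have h3 := key (I k) hbk.1 j hj hz3
    linarith
  set c := β 0 - β' 0 with hc_def
  have hJ0 : 0 < J := hJ
  have hd : ∀ i < N, θ i - θ' i = c := fun i hi => chainEq i hi 0 hJ0
  have hsum : ∑ i ∈ Finset.range N, (θ i - θ' i) = 0 := by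
    rw [Finset.sum_sub_distrib, hθ, hθ']; ring
  have hsum2 : ∑ i ∈ Finset.range N, (θ i - θ' i) = (N : ℝ) * c := by
    rw [Finset.sum_congr rfl fun i hi => hd i (Finset.mem_range.mp hi)]
    simp [mul_comm]
  have hNpos : (0 : ℝ) < N := by exact_mod_cast hN
  have hc : c = 0 := by
    have : (N : ℝ) * c = 0 := by linarith [hsum, hsum2]
    exact (mul_eq_zero.mp this).resolve_left (ne_of_gt hNpos)
  constructor
  · intro i hi
    have := hd i hi
    linarith
  · intro j hj
    have h1 := chainEq 0 hN j hj
    have h2 := hd 0 hN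
    linarith
end

section
/- Suppose the connectedness condition fails: there exists a pair (i,j) for which no chain of indices i_1,…,i_k and j_1,…,j_k exists with z_{i,j_1} = z_{i_1,j_1} = z_{i_1,j_2} = z_{i_2,j_2} = … = z_{i_k,j_k} = z_{i_k,j} = 1. Then there exist two distinct pairs (θ̃, β̃) ≠ (θ, β), with θ, θ̃ ∈ ℝ^N and β, β̃ ∈ ℝ^J, such that Σ_{i=1}^N θ̃_i = 0, Σ_{i=1}^N θ_i = 0, and θ_i − β_j = θ̃_i − β̃_j for all (i,j) with z_{ij} = 1. -/
open Filter Finset MeasureTheory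

/-- **Proposition 1, part 2.** If the connectedness condition fails for some pair `(i,j)`,
then the parameters are not identifiable: there is `(θ̃, β̃) ≠ (θ, β)` with `Σ_{i<N} θ̃_i = 0`
and `θ_i − β_j = θ̃_i − β̃_j` for all observed `(i,j)`. -/
theorem nonuniqueness_of_parameters_of_not_connected
    (N J : ℕ) (hN : 1 ≤ N) (hJ : 1 ≤ J) (z : ℕ → ℕ → Bool)
    (θ β : ℕ → ℝ)
    (hθ : (∑ i ∈ Finset.range N, θ i) = 0)
    (hfail : ∃ i < N, ∃ j < J, ¬ ConnectedPair N J z i j) :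
    ∃ θ' β' : ℕ → ℝ,
      (∑ i ∈ Finset.range N, θ' i) = 0 ∧
      (∀ i < N, ∀ j < J, z i j = true → θ i - β j = θ' i - β' j) ∧
      ¬ ((∀ i < N, θ i = θ' i) ∧ (∀ j < J, β j = β' j)) := by
  classical
  obtain ⟨i₀, hi₀, j₀, hj₀, hnc⟩ := hfail
  -- rows reachable from i₀ by a chain
  set Rrow : ℕ → Prop := fun i => i < N ∧ ∃ k : ℕ, 1 ≤ k ∧ ∃ I Jc : ℕ → ℕ,
    (∀ l, 1 ≤ l → l ≤ k → I l < N ∧ Jc l < J) ∧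
    z i₀ (Jc 1) = true ∧
    (∀ l, 1 ≤ l → l ≤ k → z (I l) (Jc l) = true) ∧
    (∀ l, 1 ≤ l → l + 1 ≤ k → z (I l) (Jc (l + 1)) = true) ∧
    I k = i with hRrowdef
  have Rbase : ∀ i' j', i' < N → j' < J → z i₀ j' = true → z i' j' = true → Rrow i' := by
    intro i' j' hi' hj' h1 h2
    refine ⟨hi', 1, le_refl 1, (fun _ => i'), (fun _ => j'), ?_, h1, ?_, ?_, rfl⟩
    · intro l _ _; exact ⟨hi', hj'⟩
    · intro l _ _; exact h2
    · intro l hl hl'; omega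
  have Rext : ∀ i i' j', Rrow i → i' < N → j' < J → z i j' = true → z i' j' = true →
      Rrow i' := by
    rintro i i' j' ⟨hiN, k, hk, I, Jc, hb, h1, h2, h3, hIk⟩ hi' hj' e1 e2
    refine ⟨hi', k + 1, by omega, (fun l => if l = k + 1 then i' else I l),
      (fun l => if l = k + 1 then j' else Jc l), ?_, ?_, ?_, ?_, by simp⟩
    · intro l hl hl'
      by_cases h : l = k + 1
      · simp only [if_pos h]; exact ⟨hi', hj'⟩
      · simp only [if_neg h]; exact hb l hl (by omega)
    · have h : (1 : ℕ) ≠ k + 1 := by omega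
      simp only [if_neg h]; exact h1
    · intro l hl hl'
      by_cases h : l = k + 1
      · simp only [if_pos h]; exact e2
      · simp only [if_neg h]; exact h2 l hl (by omega)
    · intro l hl hl'
      by_cases h : l + 1 = k + 1
      · have hlk : l = k := by omega
        subst hlk
        have hne : l ≠ l + 1 := by omega
        simp only [if_neg hne, if_pos rfl, hIk]; exact e1
      · have hlne : l ≠ k + 1 := by omega
        simp only [if_neg h, if_neg hlne]; exact h3 l hl (by omega)
  set Mrow : ℕ → Prop := fun i => i = i₀ ∨ Rrow i with hMrowdef
  set Mcol : ℕ → Prop := fun j => ∃ i, i < N ∧ Mrow i ∧ z i j = true with hMcoldef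
  have hconn : ∀ i, i < N → Mrow i → z i j₀ = true → ConnectedPair N J z i₀ j₀ := by
    intro i hiN hm hz
    rcases hm with rfl | ⟨_, k, hk, I, Jc, hb, h1, h2, h3, hIk⟩
    · exact ⟨1, le_refl 1, (fun _ => i), (fun _ => j₀), fun l _ _ => ⟨hiN, hj₀⟩, hz,
        fun l _ _ => hz, fun l hl hl' => absurd hl' (by omega), hz⟩
    · exact ⟨k, hk, I, Jc, hb, h1, h2, h3, by rw [hIk]; exact hz⟩
  have hMcolj₀ : ¬ Mcol j₀ := by
    rintro ⟨i, hiN, hm, hz⟩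
    exact hnc (hconn i hiN hm hz)
  have hedge : ∀ i j, i < N → j < J → z i j = true → (Mrow i ↔ Mcol j) := by
    intro i j hiN hjJ hz
    constructor
    · intro hm; exact ⟨i, hiN, hm, hz⟩
    · rintro ⟨i', hi'N, hm', hz'⟩
      rcases hm' with rfl | hr
      · exact Or.inr (Rbase i j hiN hjJ hz' hz)
      · exact Or.inr (Rext i' i j hr hiN hjJ hz' hz)
  set S : Finset ℕ := (Finset.range N).filter (fun i => Mrow i) with hSdef
  set n : ℕ := S.card with hndef
  have hnN : n ≤ N := by
    have := Finset.card_filter_le (Finset.range N) (fun i => Mrow i)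
    simpa [hndef, hSdef] using this
  have hi₀S : i₀ ∈ S := Finset.mem_filter.mpr ⟨Finset.mem_range.mpr hi₀, Or.inl rfl⟩
  have hn1 : 1 ≤ n := Finset.card_pos.mpr ⟨i₀, hi₀S⟩
  set a : ℝ := ((N : ℝ) - n) / N with hadef
  set b : ℝ := -(n : ℝ) / N with hbdef
  have hN0 : (0 : ℝ) < N := by exact_mod_cast hN
  refine ⟨fun i => θ i + (if Mrow i then a else b),
          fun j => β j + (if Mcol j then a else b), ?_, ?_, ?_⟩
  · rw [Finset.sum_add_distrib, hθ, zero_add]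
    have hcard2 : ((Finset.range N).filter (fun i => ¬ Mrow i)).card = N - n := by
      have h := Finset.card_filter_add_card_filter_not
        (s := Finset.range N) (p := fun i => Mrow i)
      rw [← hSdef, ← hndef, Finset.card_range] at h
      omega
    rw [Finset.sum_ite, Finset.sum_const, Finset.sum_const, ← hSdef, ← hndef, hcard2]
    have : ((N - n : ℕ) : ℝ) = (N : ℝ) - n := by
      push_cast [Nat.cast_sub hnN]; ring
    rw [nsmul_eq_mul, nsmul_eq_mul, this, hadef, hbdef]
    field_simp
    ring
  · intro i hiN j hjJ hz
    have h := hedge i j hiN hjJ hz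
    by_cases hm : Mrow i
    · simp only [if_pos hm, if_pos (h.mp hm)]; ring
    · have hc : ¬ Mcol j := fun hc => hm (h.mpr hc)
      simp only [if_neg hm, if_neg hc]; ring
  · rintro ⟨hθeq, hβeq⟩
    by_cases hnlt : n < N
    · have h := hθeq i₀ hi₀
      have hm0 : Mrow i₀ := Or.inl rfl
      simp only [if_pos hm0] at h
      have ha0 : a = 0 := by linarith
      rw [hadef, div_eq_zero_iff] at ha0
      rcases ha0 with h' | h'
      · have : (n : ℝ) < N := by exact_mod_cast hnlt
        linarith
      · linarith
    · have h := hβeq j₀ hj₀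
      simp only [if_neg hMcolj₀] at h
      have hb0 : b = 0 := by linarith
      rw [hbdef, div_eq_zero_iff] at hb0
      rcases hb0 with h' | h'
      · have : (1 : ℝ) ≤ n := by exact_mod_cast hn1
        linarith
      · linarith
end

section
/- Let A be a finite nonempty set of nonzero linear functionals on Ω_N with cardinality C_N. Suppose there exist sequences f_N > 0 and d_N ≥ 0 such that: (a) 0 < C_N < ∞ and f_N² / log C_N → ∞ as N → ∞; (b) if y, v ∈ Ω_N and ‖y − M*_N‖_σ(A) ≤ f_N, then there exists n < ∞ such that for all N > n, ‖U_N(y, v)‖_σ(A) ≤ d_N ‖y − M*_N‖_σ(A) ‖v‖_σ(A); (c) d_N f_N → 0 as N → ∞. Then P(‖R_N‖_σ(A) < f_N/2) → 1 as N → ∞. -/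
open Filter Finset MeasureTheory

noncomputable section AuxLemmas

open Real

/-- The observed-pattern finset. -/
def obsF (N J : ℕ) (z : ℕ → ℕ → Bool) : Finset (ℕ × ℕ) :=
  ((Finset.range N) ×ˢ (Finset.range J)).filter fun p => z p.1 p.2 = true

lemma sum_ite_obsF (N J : ℕ) (z : ℕ → ℕ → Bool) (F : ℕ → ℕ → ℝ) :
    (∑ i ∈ Finset.range N, ∑ j ∈ Finset.range J, if z i j = true then F i j else 0)
      = ∑ p ∈ obsF N J z, F p.1 p.2 := by
  rw [obsF, Finset.sum_filter, Finset.sum_product]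

lemma mem_obsF {N J : ℕ} {z : ℕ → ℕ → Bool} {p : ℕ × ℕ} (hp : p ∈ obsF N J z) :
    p.1 < N ∧ p.2 < J ∧ z p.1 p.2 = true := by
  simp only [obsF, Finset.mem_filter, Finset.mem_product, Finset.mem_range] at hp
  exact ⟨hp.1.1, hp.1.2, hp.2⟩

lemma ipSig_eq_sum_obsF (N J : ℕ) (z : ℕ → ℕ → Bool) (s x y : ℕ → ℕ → ℝ) :
    ipSig N J z s x y = ∑ p ∈ obsF N J z, x p.1 p.2 * s p.1 p.2 * y p.1 p.2 :=
  sum_ite_obsF N J z _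

lemma applyW_eq_sum_obsF (N J : ℕ) (z : ℕ → ℕ → Bool) (w x : ℕ → ℕ → ℝ) :
    applyW N J z w x = ∑ p ∈ obsF N J z, w p.1 p.2 * x p.1 p.2 :=
  sum_ite_obsF N J z _

lemma ipSig_comm (N J : ℕ) (z : ℕ → ℕ → Bool) (s x y : ℕ → ℕ → ℝ) :
    ipSig N J z s x y = ipSig N J z s y x := by
  rw [ipSig_eq_sum_obsF, ipSig_eq_sum_obsF]
  exact Finset.sum_congr rfl fun p _ => by ring

lemma ipSig_self_nonneg (N J : ℕ) (z : ℕ → ℕ → Bool) (s x : ℕ → ℕ → ℝ)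
    (hs : ∀ i j, 0 < s i j) : 0 ≤ ipSig N J z s x x := by
  rw [ipSig_eq_sum_obsF]
  refine Finset.sum_nonneg fun p _ => ?_
  have := (hs p.1 p.2).le
  nlinarith [sq_nonneg (x p.1 p.2)]

lemma normSig_nonneg (N J : ℕ) (z : ℕ → ℕ → Bool) (s x : ℕ → ℕ → ℝ) :
    0 ≤ normSig N J z s x := Real.sqrt_nonneg _

lemma normSig_sq (N J : ℕ) (z : ℕ → ℕ → Bool) (s x : ℕ → ℕ → ℝ)
    (hs : ∀ i j, 0 < s i j) :
    normSig N J z s x ^ 2 = ipSig N J z s x x := by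
  rw [normSig, Real.sq_sqrt (ipSig_self_nonneg N J z s x hs)]

lemma abs_ipSig_le (N J : ℕ) (z : ℕ → ℕ → Bool) (s x y : ℕ → ℕ → ℝ)
    (hs : ∀ i j, 0 < s i j) :
    |ipSig N J z s x y| ≤ normSig N J z s x * normSig N J z s y := by
  have h1 : ipSig N J z s x y ^ 2 ≤ ipSig N J z s x x * ipSig N J z s y y := by
    rw [ipSig_eq_sum_obsF, ipSig_eq_sum_obsF, ipSig_eq_sum_obsF]
    have h := Finset.sum_mul_sq_le_sq_mul_sq (obsF N J z)
      (fun p => x p.1 p.2 * Real.sqrt (s p.1 p.2))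
      (fun p => y p.1 p.2 * Real.sqrt (s p.1 p.2))
    have e1 : ∀ p ∈ obsF N J z,
        (x p.1 p.2 * Real.sqrt (s p.1 p.2)) * (y p.1 p.2 * Real.sqrt (s p.1 p.2))
          = x p.1 p.2 * s p.1 p.2 * y p.1 p.2 := by
      intro p _
      have : Real.sqrt (s p.1 p.2) * Real.sqrt (s p.1 p.2) = s p.1 p.2 :=
        Real.mul_self_sqrt (hs p.1 p.2).le
      linear_combination (x p.1 p.2 * y p.1 p.2) * this
    have e2 : ∀ p ∈ obsF N J z,
        (x p.1 p.2 * Real.sqrt (s p.1 p.2)) ^ 2 = x p.1 p.2 * s p.1 p.2 * x p.1 p.2 := by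
      intro p _
      have : Real.sqrt (s p.1 p.2) * Real.sqrt (s p.1 p.2) = s p.1 p.2 :=
        Real.mul_self_sqrt (hs p.1 p.2).le
      linear_combination (x p.1 p.2 * x p.1 p.2) * this
    have e3 : ∀ p ∈ obsF N J z,
        (y p.1 p.2 * Real.sqrt (s p.1 p.2)) ^ 2 = y p.1 p.2 * s p.1 p.2 * y p.1 p.2 := by
      intro p _
      have : Real.sqrt (s p.1 p.2) * Real.sqrt (s p.1 p.2) = s p.1 p.2 :=
        Real.mul_self_sqrt (hs p.1 p.2).le
      linear_combination (y p.1 p.2 * y p.1 p.2) * this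
    rw [Finset.sum_congr rfl e1, Finset.sum_congr rfl e2, Finset.sum_congr rfl e3] at h
    exact h
  have hx := ipSig_self_nonneg N J z s x hs
  have hy := ipSig_self_nonneg N J z s y hs
  rw [normSig, normSig, ← Real.sqrt_mul hx]
  rw [← Real.sqrt_sq_eq_abs]
  exact Real.sqrt_le_sqrt h1

end AuxLemmas
noncomputable section AuxLemmas2

lemma zero_mem_OmegaSp (N J : ℕ) (z : ℕ → ℕ → Bool) :
    (fun _ _ => (0 : ℝ)) ∈ OmegaSp N J z :=
  ⟨fun _ => 0, fun _ => 0, by simp, fun _ _ _ _ _ => by simp⟩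

lemma smul_mem_OmegaSp {N J : ℕ} {z : ℕ → ℕ → Bool} {x : ℕ → ℕ → ℝ} (t : ℝ)
    (hx : x ∈ OmegaSp N J z) : (fun i j => t * x i j) ∈ OmegaSp N J z := by
  obtain ⟨θ, β, hθ, hx⟩ := hx
  refine ⟨fun i => t * θ i, fun j => t * β j, ?_, ?_⟩
  · show (∑ i ∈ Finset.range N, t * θ i) = 0
    rw [← Finset.mul_sum, hθ, mul_zero]
  · intro i hi j hj hz
    show t * x i j = t * θ i - t * β j
    rw [hx i hi j hj hz]; ring

lemma addsmul_mem_OmegaSp {N J : ℕ} {z : ℕ → ℕ → Bool} {x y : ℕ → ℕ → ℝ} (t : ℝ)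
    (hx : x ∈ OmegaSp N J z) (hy : y ∈ OmegaSp N J z) :
    (fun i j => x i j + t * y i j) ∈ OmegaSp N J z := by
  obtain ⟨θ, β, hθ, hx⟩ := hx
  obtain ⟨θ', β', hθ', hy⟩ := hy
  refine ⟨fun i => θ i + t * θ' i, fun j => β j + t * β' j, ?_, ?_⟩
  · show (∑ i ∈ Finset.range N, (θ i + t * θ' i)) = 0
    rw [Finset.sum_add_distrib, hθ, ← Finset.mul_sum, hθ', mul_zero, add_zero]
  · intro i hi j hj hz
    show x i j + t * y i j = (θ i + t * θ' i) - (β j + t * β' j)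
    rw [hx i hi j hj hz, hy i hi j hj hz]; ring

lemma neg_mem_OmegaSp {N J : ℕ} {z : ℕ → ℕ → Bool} {x : ℕ → ℕ → ℝ}
    (hx : x ∈ OmegaSp N J z) : (fun i j => -x i j) ∈ OmegaSp N J z := by
  have := smul_mem_OmegaSp (-1) hx
  simpa using this

/-- Riesz representation for the (possibly degenerate) inner product on `Ω_N`. -/
lemma riesz_exists (N J : ℕ) (z : ℕ → ℕ → Bool) (s c : ℕ → ℕ → ℝ)
    (hs : ∀ i j, 0 < s i j) :
    ∃ a ∈ OmegaSp N J z, ∀ x ∈ OmegaSp N J z,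
      ipSig N J z s x a
        = ∑ i ∈ Finset.range N, ∑ j ∈ Finset.range J,
            if z i j = true then x i j * c i j else 0 := by
  classical
  -- finite-dimensional parameter space
  set V := ((Fin N → ℝ) × (Fin J → ℝ))
  set P : Finset (Fin N × Fin J) :=
    Finset.univ.filter (fun p => z p.1 p.2 = true) with hP
  set d : V → (Fin N × Fin J) → ℝ := fun v p => v.1 p.1 - v.2 p.2 with hd
  have dadd : ∀ (v w : V) p, d (v + w) p = d v p + d w p := by
    intro v w p
    show (v.1 p.1 + w.1 p.1) - (v.2 p.2 + w.2 p.2)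
      = (v.1 p.1 - v.2 p.2) + (w.1 p.1 - w.2 p.2)
    ring
  have dsmul : ∀ (t : ℝ) (v : V) p, d (t • v) p = t * d v p := by
    intro t v p
    show t * v.1 p.1 - t * v.2 p.2 = t * (v.1 p.1 - v.2 p.2)
    ring
  -- the bilinear map φ and the functional L
  set φ : V →ₗ[ℝ] Module.Dual ℝ V :=
    LinearMap.mk₂ ℝ (fun v w => ∑ p ∈ P, s p.1 p.2 * d v p * d w p)
      (by intro v v' w; rw [← Finset.sum_add_distrib]
          exact Finset.sum_congr rfl fun p _ => by rw [dadd]; ring)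
      (by intro t v w; rw [smul_eq_mul, Finset.mul_sum]
          exact Finset.sum_congr rfl fun p _ => by rw [dsmul]; ring)
      (by intro v w w'; rw [← Finset.sum_add_distrib]
          exact Finset.sum_congr rfl fun p _ => by rw [dadd]; ring)
      (by intro t v w; rw [smul_eq_mul, Finset.mul_sum]
          exact Finset.sum_congr rfl fun p _ => by rw [dsmul]; ring) with hφ
  have φ_apply : ∀ v w : V, φ v w = ∑ p ∈ P, s p.1 p.2 * d v p * d w p := fun _ _ => rfl
  set L : Module.Dual ℝ V :=
    { toFun := fun v => ∑ p ∈ P, c p.1 p.2 * d v p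
      map_add' := by intro v w; rw [← Finset.sum_add_distrib]
                     exact Finset.sum_congr rfl fun p _ => by rw [dadd]; ring
      map_smul' := by intro t v
                      simp only [RingHom.id_apply, smul_eq_mul, Finset.mul_sum]
                      exact Finset.sum_congr rfl fun p _ => by rw [dsmul]; ring } with hL
  have L_apply : ∀ v : V, L v = ∑ p ∈ P, c p.1 p.2 * d v p := fun _ => rfl
  -- kernel elements have vanishing pattern entries
  have hker : ∀ k : V, k ∈ LinearMap.ker φ → ∀ p ∈ P, d k p = 0 := by
    intro k hk p hp
    have h0 : φ k k = 0 := by rw [LinearMap.mem_ker.mp hk]; rfl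
    rw [φ_apply] at h0
    have hnn : ∀ q ∈ P, 0 ≤ s q.1 q.2 * d k q * d k q := by
      intro q _; have := (hs q.1 q.2).le; nlinarith [sq_nonneg (d k q)]
    have h1 := (Finset.sum_eq_zero_iff_of_nonneg hnn).mp h0 p hp
    rw [mul_assoc] at h1
    rcases mul_eq_zero.mp h1 with h | h
    · exact absurd h (hs p.1 p.2).ne'
    · exact mul_self_eq_zero.mp h
  -- range φ = dual annihilator of ker φ
  have hle : LinearMap.range φ ≤ (LinearMap.ker φ).dualAnnihilator := by
    rintro _ ⟨v, rfl⟩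
    rw [Submodule.mem_dualAnnihilator]
    intro k hk
    have : φ v k = ∑ p ∈ P, s p.1 p.2 * d k p * d v p := by
      rw [φ_apply]; exact Finset.sum_congr rfl fun p _ => by ring
    rw [this]
    exact Finset.sum_eq_zero fun p hp => by rw [hker k hk p hp]; ring
  have hrank : Module.finrank ℝ (LinearMap.range φ)
      = Module.finrank ℝ ((LinearMap.ker φ).dualAnnihilator) := by
    have h1 := LinearMap.finrank_range_add_finrank_ker φ
    have h2 := Submodule.finrank_quotient_add_finrank (LinearMap.ker φ)
    have h3 : Module.finrank ℝ (V ⧸ LinearMap.ker φ)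
        = Module.finrank ℝ ((LinearMap.ker φ).dualAnnihilator) :=
      LinearEquiv.finrank_eq (Subspace.quotEquivAnnihilator _)
    omega
  have heq : LinearMap.range φ = (LinearMap.ker φ).dualAnnihilator :=
    Submodule.eq_of_le_of_finrank_le hle (le_of_eq hrank.symm)
  have hLmem : L ∈ (LinearMap.ker φ).dualAnnihilator := by
    rw [Submodule.mem_dualAnnihilator]
    intro k hk
    rw [L_apply]
    exact Finset.sum_eq_zero fun p hp => by rw [hker k hk p hp]; ring
  rw [← heq] at hLmem
  obtain ⟨v, hv⟩ := hLmem
  -- build the representer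
  set θraw : ℕ → ℝ := fun i => if h : i < N then v.1 ⟨i, h⟩ else 0 with hθraw
  set βraw : ℕ → ℝ := fun j => if h : j < J then v.2 ⟨j, h⟩ else 0 with hβraw
  set a : ℕ → ℕ → ℝ := fun i j => θraw i - βraw j with ha
  set t : ℝ := (∑ i ∈ Finset.range N, θraw i) / N with ht
  have hamem : a ∈ OmegaSp N J z := by
    refine ⟨fun i => θraw i - t, fun j => βraw j - t, ?_, ?_⟩
    · rw [Finset.sum_sub_distrib, Finset.sum_const, Finset.card_range]
      rcases Nat.eq_zero_or_pos N with h | h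
      · simp [h]
      · rw [ht, nsmul_eq_mul]
        field_simp
        ring
    · intro i _ j _ _
      show a i j = (θraw i - t) - (βraw j - t)
      simp only [ha]; ring
  refine ⟨a, hamem, ?_⟩
  intro x hx
  obtain ⟨θx, βx, hθx, hxe⟩ := hx
  set u : V := (fun i : Fin N => θx i.1, fun j : Fin J => βx j.1) with hu
  have key : φ v u = L u := by rw [hv]
  -- bridge between ℕ-indexed and Fin-indexed sums
  have bridge : ∀ F : ℕ → ℕ → ℝ,
      (∑ i ∈ Finset.range N, ∑ j ∈ Finset.range J, if z i j = true then F i j else 0)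
        = ∑ p ∈ P, F p.1.1 p.2.1 := by
    intro F
    symm
    rw [hP, Finset.sum_filter, ← Finset.univ_product_univ, Finset.sum_product,
      ← Fin.sum_univ_eq_sum_range (fun i => ∑ j ∈ Finset.range J,
          if z i j = true then F i j else 0) N]
    exact Finset.sum_congr rfl fun i _ =>
      Fin.sum_univ_eq_sum_range (fun j => if z i.1 j = true then F i.1 j else 0) J
  have hxobs : ∀ p : Fin N × Fin J, p ∈ P → x p.1.1 p.2.1 = d u p := by
    intro p hp
    have hz : z p.1.1 p.2.1 = true := by
      rw [hP] at hp; exact (Finset.mem_filter.mp hp).2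
    exact hxe p.1.1 p.1.isLt p.2.1 p.2.isLt hz
  have haobs : ∀ p : Fin N × Fin J, a p.1.1 p.2.1 = d v p := by
    intro p
    simp only [ha, hθraw, hβraw, hd]
    rw [dif_pos p.1.isLt, dif_pos p.2.isLt]
  calc ipSig N J z s x a
      = ∑ p ∈ P, x p.1.1 p.2.1 * s p.1.1 p.2.1 * a p.1.1 p.2.1 := by
        rw [ipSig]; exact bridge _
    _ = ∑ p ∈ P, s p.1.1 p.2.1 * d v p * d u p := by
        refine Finset.sum_congr rfl fun p hp => ?_
        rw [hxobs p hp, haobs p]; ring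
    _ = L u := key
    _ = ∑ p ∈ P, c p.1.1 p.2.1 * d u p := L_apply u
    _ = ∑ i ∈ Finset.range N, ∑ j ∈ Finset.range J,
          if z i j = true then x i j * c i j else 0 := by
        rw [bridge (fun i j => x i j * c i j)]
        exact Finset.sum_congr rfl fun p hp => by rw [hxobs p hp]; ring

end AuxLemmas2
noncomputable section AuxLemmas3

lemma ipSig_smul_left (N J : ℕ) (z : ℕ → ℕ → Bool) (s : ℕ → ℕ → ℝ) (t : ℝ)
    (x y : ℕ → ℕ → ℝ) :
    ipSig N J z s (fun i j => t * x i j) y = t * ipSig N J z s x y := by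
  rw [ipSig_eq_sum_obsF, ipSig_eq_sum_obsF, Finset.mul_sum]
  exact Finset.sum_congr rfl fun p _ => by ring

lemma ipSig_smul_right (N J : ℕ) (z : ℕ → ℕ → Bool) (s : ℕ → ℕ → ℝ) (t : ℝ)
    (x y : ℕ → ℕ → ℝ) :
    ipSig N J z s x (fun i j => t * y i j) = t * ipSig N J z s x y := by
  rw [ipSig_comm, ipSig_smul_left, ipSig_comm]

lemma applyW_smul (N J : ℕ) (z : ℕ → ℕ → Bool) (w : ℕ → ℕ → ℝ) (t : ℝ)
    (x : ℕ → ℕ → ℝ) :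
    applyW N J z w (fun i j => t * x i j) = t * applyW N J z w x := by
  rw [applyW_eq_sum_obsF, applyW_eq_sum_obsF, Finset.mul_sum]
  exact Finset.sum_congr rfl fun p _ => by ring

lemma normSig_zero_fun (N J : ℕ) (z : ℕ → ℕ → Bool) (s : ℕ → ℕ → ℝ) :
    normSig N J z s (fun _ _ => 0) = 0 := by
  have : ipSig N J z s (fun _ _ => 0) (fun _ _ => 0) = 0 := by
    rw [ipSig_eq_sum_obsF]; exact Finset.sum_eq_zero fun p _ => by ring
  rw [normSig, this, Real.sqrt_zero]

/-- If a coefficient array `w` is represented on `Ω_N` by `a`, then `σ(g_w) = ‖a‖_σ`. -/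
lemma sigOf_eq_normSig (N J : ℕ) (z : ℕ → ℕ → Bool) (s : ℕ → ℕ → ℝ)
    (hs : ∀ i j, 0 < s i j) (w a : ℕ → ℕ → ℝ) (ha : a ∈ OmegaSp N J z)
    (hrep : ∀ x ∈ OmegaSp N J z, ipSig N J z s x a = applyW N J z w x) :
    sigOf N J z s w = normSig N J z s a := by
  set σg := normSig N J z s a with hσ
  have hσ0 : 0 ≤ σg := normSig_nonneg N J z s a
  have hub : ∀ b ∈ (fun x => |applyW N J z w x|) ''
      {x | x ∈ OmegaSp N J z ∧ normSig N J z s x ≤ 1}, b ≤ σg := by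
    rintro b ⟨x, ⟨hxΩ, hx1⟩, rfl⟩
    dsimp only
    rw [← hrep x hxΩ]
    calc |ipSig N J z s x a| ≤ normSig N J z s x * σg := abs_ipSig_le N J z s x a hs
      _ ≤ 1 * σg := by
          exact mul_le_mul_of_nonneg_right hx1 hσ0
      _ = σg := one_mul σg
  have hbdd : BddAbove ((fun x => |applyW N J z w x|) ''
      {x | x ∈ OmegaSp N J z ∧ normSig N J z s x ≤ 1}) := ⟨σg, hub⟩
  refine le_antisymm (Real.sSup_le hub hσ0) ?_
  rcases eq_or_lt_of_le hσ0 with h0 | hpos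
  · rw [sigOf, ← h0]
    have hmem : (0:ℝ) ∈ (fun x => |applyW N J z w x|) ''
        {x | x ∈ OmegaSp N J z ∧ normSig N J z s x ≤ 1} := by
      refine ⟨fun _ _ => 0, ⟨zero_mem_OmegaSp N J z, ?_⟩, ?_⟩
      · rw [normSig_zero_fun]; norm_num
      · have h' : applyW N J z w (fun _ _ => 0) = 0 := by
          rw [applyW_eq_sum_obsF]; exact Finset.sum_eq_zero fun p _ => by ring
        dsimp only
        rw [h', abs_zero]
    exact le_csSup hbdd hmem
  · set x₀ : ℕ → ℕ → ℝ := fun i j => σg⁻¹ * a i j with hx₀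
    have hx₀Ω : x₀ ∈ OmegaSp N J z := smul_mem_OmegaSp _ ha
    have haa : ipSig N J z s a a = σg ^ 2 := (normSig_sq N J z s a hs).symm
    have hip : ipSig N J z s x₀ a = σg := by
      rw [hx₀, ipSig_smul_left, haa]
      field_simp
    have hnx₀ : normSig N J z s x₀ ≤ 1 := by
      have : ipSig N J z s x₀ x₀ = 1 := by
        rw [hx₀, ipSig_smul_left, ipSig_smul_right, haa]
        field_simp
      rw [normSig, this, Real.sqrt_one]
    have hmem : σg ∈ (fun x => |applyW N J z w x|) ''
        {x | x ∈ OmegaSp N J z ∧ normSig N J z s x ≤ 1} := by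
      refine ⟨x₀, ⟨hx₀Ω, hnx₀⟩, ?_⟩
      dsimp only
      rw [← hrep x₀ hx₀Ω, hip, abs_of_pos hpos]
    exact le_csSup hbdd hmem

lemma abs_applyW_le (N J : ℕ) (z : ℕ → ℕ → Bool) (s : ℕ → ℕ → ℝ)
    (hs : ∀ i j, 0 < s i j) (w a : ℕ → ℕ → ℝ) (ha : a ∈ OmegaSp N J z)
    (hrep : ∀ x ∈ OmegaSp N J z, ipSig N J z s x a = applyW N J z w x) :
    ∀ x ∈ OmegaSp N J z, |applyW N J z w x| ≤ normSig N J z s x * sigOf N J z s w := by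
  intro x hx
  rw [sigOf_eq_normSig N J z s hs w a ha hrep, ← hrep x hx]
  exact abs_ipSig_le N J z s x a hs

lemma normOn_nonneg (N J : ℕ) (z : ℕ → ℕ → Bool) (s : ℕ → ℕ → ℝ)
    (A : Set (ℕ → ℕ → ℝ)) (x : ℕ → ℕ → ℝ) : 0 ≤ normOn N J z s A x :=
  Real.sInf_nonneg fun _ hc => hc.1

lemma normOn_le (N J : ℕ) (z : ℕ → ℕ → Bool) (s : ℕ → ℕ → ℝ)
    (A : Set (ℕ → ℕ → ℝ)) (x : ℕ → ℕ → ℝ) {c : ℝ} (h0 : 0 ≤ c)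
    (h : ∀ w ∈ A, |applyW N J z w x| ≤ c * sigOf N J z s w) :
    normOn N J z s A x ≤ c :=
  csInf_le ⟨0, fun _ hb => hb.1⟩ ⟨h0, h⟩

lemma normOn_bound (N J : ℕ) (z : ℕ → ℕ → Bool) (s : ℕ → ℕ → ℝ)
    (A : Set (ℕ → ℕ → ℝ)) (x : ℕ → ℕ → ℝ) {c₀ : ℝ} (h0 : 0 ≤ c₀)
    (h : ∀ w ∈ A, |applyW N J z w x| ≤ c₀ * sigOf N J z s w) :
    ∀ w ∈ A, |applyW N J z w x| ≤ normOn N J z s A x * sigOf N J z s w := by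
  set S := {c : ℝ | 0 ≤ c ∧ ∀ w ∈ A, |applyW N J z w x| ≤ c * sigOf N J z s w} with hS
  have hclosed : IsClosed S := by
    have : S = Set.Ici 0 ∩ ⋂ w ∈ A, {c : ℝ | |applyW N J z w x| ≤ c * sigOf N J z s w} := by
      ext c
      simp only [hS, Set.mem_setOf_eq, Set.mem_inter_iff, Set.mem_Ici, Set.mem_iInter]
    rw [this]
    exact isClosed_Ici.inter (isClosed_biInter fun w _ =>
      isClosed_le continuous_const (continuous_id.mul continuous_const))
  have hmem : sInf S ∈ S :=
    hclosed.csInf_mem ⟨c₀, h0, h⟩ ⟨0, fun _ hb => hb.1⟩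
  exact hmem.2

end AuxLemmas3
noncomputable section AuxLemmas4

def Kfun (m u : ℝ) : ℝ :=
  Real.log (1 + Real.exp (m + u)) - Real.log (1 + Real.exp m) - u * logisticFn m

lemma one_add_exp_pos (t : ℝ) : 0 < 1 + Real.exp t := by positivity

lemma logisticFn_pos (t : ℝ) : 0 < logisticFn t :=
  div_pos (Real.exp_pos t) (one_add_exp_pos t)

lemma logisticFn_lt_one (t : ℝ) : logisticFn t < 1 := by
  rw [logisticFn, div_lt_one (one_add_exp_pos t)]
  linarith

lemma varFn_pos (t : ℝ) : 0 < varFn t :=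
  div_pos (Real.exp_pos t) (by positivity)

lemma hasDerivAt_log_one_add_exp (t : ℝ) :
    HasDerivAt (fun u => Real.log (1 + Real.exp u)) (logisticFn t) t := by
  have h : HasDerivAt (fun u : ℝ => 1 + Real.exp u) (Real.exp t) t :=
    (Real.hasDerivAt_exp t).const_add 1
  exact h.log (one_add_exp_pos t).ne'

lemma hasDerivAt_logisticFn (t : ℝ) : HasDerivAt logisticFn (varFn t) t := by
  have h1 : HasDerivAt (fun u : ℝ => 1 + Real.exp u) (Real.exp t) t :=
    (Real.hasDerivAt_exp t).const_add 1
  have h := (Real.hasDerivAt_exp t).div h1 (one_add_exp_pos t).ne'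
  have : HasDerivAt logisticFn
      ((Real.exp t * (1 + Real.exp t) - Real.exp t * Real.exp t) / (1 + Real.exp t) ^ 2) t := h
  convert this using 1
  rw [varFn]
  field_simp
  ring

lemma Kfun_zero (m : ℝ) : Kfun m 0 = 0 := by simp [Kfun]

lemma hasDerivAt_Kfun (m q u : ℝ) :
    HasDerivAt (fun u => Kfun m (u * q))
      (q * (logisticFn (m + u * q) - logisticFn m)) u := by
  have hin : HasDerivAt (fun u : ℝ => m + u * q) q u :=
    (hasDerivAt_mul_const q).const_add m
  have h1 : HasDerivAt (fun u : ℝ => Real.log (1 + Real.exp (m + u * q)))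
      (logisticFn (m + u * q) * q) u :=
    by have := (hasDerivAt_log_one_add_exp (m + u * q)).comp u hin; exact this
  have h3 : HasDerivAt (fun u : ℝ => u * q * logisticFn m) (q * logisticFn m) u := by
    have := hasDerivAt_mul_const (x := u) (q * logisticFn m)
    simpa [mul_assoc] using this
  have h := (h1.sub_const (Real.log (1 + Real.exp m))).sub h3
  refine h.congr_deriv ?_
  ring

lemma hasDerivAt_Kfun' (m q u : ℝ) :
    HasDerivAt (fun u => q * (logisticFn (m + u * q) - logisticFn m))
      (q ^ 2 * varFn (m + u * q)) u := by
  have hin : HasDerivAt (fun u : ℝ => m + u * q) q u :=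
    (hasDerivAt_mul_const q).const_add m
  have h1 : HasDerivAt (fun u : ℝ => logisticFn (m + u * q))
      (varFn (m + u * q) * q) u :=
    by have := (hasDerivAt_logisticFn (m + u * q)).comp u hin; exact this
  have h := ((h1.sub_const (logisticFn m)).const_mul q)
  refine h.congr_deriv ?_
  ring

lemma le_of_hasDerivAt_nonneg {T : ℝ} (hT : 0 ≤ T) {f g : ℝ → ℝ}
    (hf : ∀ u, HasDerivAt f (g u) u) (hg : ∀ u ∈ Set.Icc (0:ℝ) T, 0 ≤ g u) :
    f 0 ≤ f T := by
  have hdiff : Differentiable ℝ f := fun u => (hf u).differentiableAt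
  have hmono : MonotoneOn f (Set.Icc (0:ℝ) T) := by
    refine monotoneOn_of_deriv_nonneg (convex_Icc 0 T) hdiff.continuous.continuousOn
      (hdiff.differentiableOn) ?_
    intro u hu
    rw [(hf u).deriv]
    exact hg u (interior_subset hu)
  exact hmono ⟨le_refl 0, hT⟩ ⟨hT, le_refl T⟩ hT

/-- Second-order Taylor bound: if `f 0 = 0`, `f' 0 = 0` and `f'' ≤ B` on `[0, T]`,
then `f T ≤ B T² / 2`. -/
lemma taylor_quad_bound {T B : ℝ} (hT : 0 ≤ T) {f g h : ℝ → ℝ}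
    (hf : ∀ u, HasDerivAt f (g u) u) (hg : ∀ u, HasDerivAt g (h u) u)
    (hf0 : f 0 = 0) (hg0 : g 0 = 0) (hh : ∀ u ∈ Set.Icc (0:ℝ) T, h u ≤ B) :
    f T ≤ B * T ^ 2 / 2 := by
  have step1 : ∀ u ∈ Set.Icc (0:ℝ) T, g u ≤ B * u := by
    intro u hu
    have hu0 : 0 ≤ u := hu.1
    have := le_of_hasDerivAt_nonneg hu0
      (f := fun v => B * v - g v) (g := fun v => B - h v)
      (fun v => by
        have h1 : HasDerivAt (fun v : ℝ => B * v) B v := by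
          simpa using (hasDerivAt_id v).const_mul B
        exact h1.sub (hg v))
      (fun v hv => by
        have : h v ≤ B := hh v ⟨hv.1, hv.2.trans hu.2⟩
        show (0:ℝ) ≤ B - h v
        linarith)
    simp only [mul_zero, hg0, sub_zero] at this
    linarith
  have step2 := le_of_hasDerivAt_nonneg hT
    (f := fun v => B * v ^ 2 / 2 - f v) (g := fun v => B * v - g v)
    (fun v => by
      have h1 : HasDerivAt (fun v : ℝ => B * v ^ 2 / 2) (B * v) v := by
        have := ((hasDerivAt_pow 2 v).const_mul B).div_const 2
        refine this.congr_deriv ?_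
        norm_num
        ring
      exact h1.sub (hf v))
    (fun v hv => by
      have := step1 v hv
      show (0:ℝ) ≤ B * v - g v
      linarith)
  simp only [hf0, sub_zero, mul_zero, zero_pow, zero_div] at step2
  have : (0:ℝ) ≤ B * T ^ 2 / 2 - f T := by
    convert step2 using 2 <;> norm_num
  linarith

end AuxLemmas4
noncomputable section AuxLemmas5

open ProbabilityTheory

lemma exp_Kfun (m s : ℝ) :
    Real.exp (Kfun m s)
      = Real.exp (-(s * logisticFn m)) * (1 + (Real.exp s - 1) * logisticFn m) := by
  have h1 : (0:ℝ) < 1 + Real.exp (m + s) := one_add_exp_pos _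
  have h2 : (0:ℝ) < 1 + Real.exp m := one_add_exp_pos _
  have key : 1 + (Real.exp s - 1) * logisticFn m = (1 + Real.exp (m + s)) / (1 + Real.exp m) := by
    rw [logisticFn, Real.exp_add]
    field_simp
    ring
  rw [Kfun, sub_sub, Real.exp_sub,
      Real.exp_add (Real.log (1 + Real.exp m)) (s * logisticFn m),
      Real.exp_log h1, Real.exp_log h2, key, Real.exp_neg]
  field_simp

lemma mgf_bernoulli_affine {Ω' : Type*} [MeasurableSpace Ω'] (μ : Measure Ω')
    [IsProbabilityMeasure μ] (Y : Ω' → ℝ) (hY : Measurable Y)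
    (hval : ∀ ω, Y ω = 0 ∨ Y ω = 1) (p : ℝ) (hp0 : 0 ≤ p)
    (hprob : μ {ω | Y ω = 1} = ENNReal.ofReal p) (q e t : ℝ) :
    mgf (fun ω => q * (Y ω - e)) μ t
      = Real.exp (-(t * q * e)) * (1 + (Real.exp (t * q) - 1) * p) := by
  classical
  set S : Set Ω' := {ω | Y ω = 1} with hSdef
  have hS : MeasurableSet S := hY (measurableSet_singleton 1)
  have hpt : (fun ω => Real.exp (t * (q * (Y ω - e))))
      = fun ω => Real.exp (-(t * q * e)) *
          (1 + (Real.exp (t * q) - 1) * S.indicator (fun _ => (1:ℝ)) ω) := by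
    funext ω
    rcases hval ω with h0 | h1
    · have hnot : ω ∉ S := by simp [hSdef, h0]
      rw [Set.indicator_of_notMem hnot, h0]
      rw [show t * (q * ((0:ℝ) - e)) = -(t * q * e) by ring]
      ring
    · have hin : ω ∈ S := by simp [hSdef, h1]
      rw [Set.indicator_of_mem hin, h1]
      rw [show t * (q * ((1:ℝ) - e)) = -(t * q * e) + t * q by ring, Real.exp_add]
      ring
  rw [mgf, hpt]
  rw [MeasureTheory.integral_const_mul]
  have hint : MeasureTheory.Integrable
      (fun ω => (Real.exp (t * q) - 1) * S.indicator (fun _ => (1:ℝ)) ω) μ :=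
    (((MeasureTheory.integrable_const (1:ℝ)).indicator hS)).const_mul _
  rw [MeasureTheory.integral_add (MeasureTheory.integrable_const 1) hint,
    MeasureTheory.integral_const, MeasureTheory.integral_const_mul,
    MeasureTheory.integral_indicator_const (1:ℝ) hS]
  rw [MeasureTheory.measureReal_def μ S, hprob, ENNReal.toReal_ofReal hp0]
  simp [measure_univ]

lemma chernoff_tail {Ω' : Type*} [MeasurableSpace Ω'] (μ : Measure Ω')
    [IsProbabilityMeasure μ]
    (N J : ℕ) (z : ℕ → ℕ → Bool) (θ β : ℕ → ℝ) (Y : ℕ → ℕ → Ω' → ℝ)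
    (hmeas : ∀ i j, Measurable (Y i j))
    (hval : ∀ i j ω, Y i j ω = 0 ∨ Y i j ω = 1)
    (hprob : ∀ i < N, ∀ j < J, z i j = true →
      μ {ω | Y i j ω = 1} = ENNReal.ofReal (logisticFn (θ i - β j)))
    (hind : ProbabilityTheory.iIndepFun (m := fun _ : ℕ × ℕ => Real.measurableSpace)
      (fun p : ℕ × ℕ => Y p.1 p.2) μ)
    (a : ℕ → ℕ → ℝ) (t ε B : ℝ) (ht : 0 ≤ t)
    (hB : ∀ u ∈ Set.Icc (0:ℝ) t, (∑ p ∈ obsF N J z,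
        a p.1 p.2 ^ 2 * varFn (θ p.1 - β p.2 + u * a p.1 p.2)) ≤ B) :
    μ {ω | ε ≤ ∑ p ∈ obsF N J z,
        a p.1 p.2 * (Y p.1 p.2 ω - logisticFn (θ p.1 - β p.2))}
      ≤ ENNReal.ofReal (Real.exp (-t * ε + B * t ^ 2 / 2)) := by
  classical
  set X : ℕ × ℕ → Ω' → ℝ :=
    fun p ω => a p.1 p.2 * (Y p.1 p.2 ω - logisticFn (θ p.1 - β p.2)) with hX
  have hXmeas : ∀ p, Measurable (X p) :=
    fun p => ((hmeas p.1 p.2).sub measurable_const).const_mul _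
  have hindX : ProbabilityTheory.iIndepFun (m := fun _ : ℕ × ℕ => Real.measurableSpace) X μ := by
    have := hind.comp
      (fun p (r : ℝ) => a p.1 p.2 * (r - logisticFn (θ p.1 - β p.2)))
      (fun p => (measurable_id.sub measurable_const).const_mul _)
    exact this
  have habs : ∀ p (ω : Ω'), |X p ω| ≤ |a p.1 p.2| := by
    intro p ω
    rw [hX]
    have hE0 := logisticFn_pos (θ p.1 - β p.2)
    have hE1 := logisticFn_lt_one (θ p.1 - β p.2)
    rw [abs_mul]
    have : |Y p.1 p.2 ω - logisticFn (θ p.1 - β p.2)| ≤ 1 := by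
      rcases hval p.1 p.2 ω with h | h <;> rw [h, abs_le] <;> constructor <;> linarith
    calc |a p.1 p.2| * |Y p.1 p.2 ω - logisticFn (θ p.1 - β p.2)|
        ≤ |a p.1 p.2| * 1 := mul_le_mul_of_nonneg_left this (abs_nonneg _)
      _ = |a p.1 p.2| := mul_one _
  have h_int : ∀ p ∈ obsF N J z,
      MeasureTheory.Integrable (fun ω => Real.exp (t * X p ω)) μ := by
    intro p _
    refine MeasureTheory.Integrable.mono' (MeasureTheory.integrable_const
      (Real.exp (|t| * |a p.1 p.2|)))
      (((hXmeas p).const_mul t).exp.aestronglyMeasurable) (Filter.Eventually.of_forall ?_)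
    intro ω
    rw [Real.norm_eq_abs, Real.abs_exp, Real.exp_le_exp]
    calc t * X p ω ≤ |t * X p ω| := le_abs_self _
      _ = |t| * |X p ω| := abs_mul _ _
      _ ≤ |t| * |a p.1 p.2| := mul_le_mul_of_nonneg_left (habs p ω) (abs_nonneg _)
  have h_int_sum : MeasureTheory.Integrable
      (fun ω => Real.exp (t * (∑ p ∈ obsF N J z, X p) ω)) μ :=
    hindX.integrable_exp_mul_sum hXmeas h_int
  have key := ProbabilityTheory.measure_ge_le_exp_mul_mgf
    (X := ∑ p ∈ obsF N J z, X p) (μ := μ) ε ht h_int_sum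
  -- compute the mgf
  have hmgf : mgf (∑ p ∈ obsF N J z, X p) μ t
      = Real.exp (∑ p ∈ obsF N J z, Kfun (θ p.1 - β p.2) (t * a p.1 p.2)) := by
    rw [hindX.mgf_sum hXmeas, Real.exp_sum]
    refine Finset.prod_congr rfl fun p hp => ?_
    obtain ⟨hpN, hpJ, hpz⟩ := mem_obsF hp
    have hmgfp := mgf_bernoulli_affine μ (Y p.1 p.2) (hmeas p.1 p.2)
      (hval p.1 p.2) (logisticFn (θ p.1 - β p.2)) (logisticFn_pos _).le
      (hprob p.1 hpN p.2 hpJ hpz) (a p.1 p.2) (logisticFn (θ p.1 - β p.2)) t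
    have hXp : X p = fun ω => a p.1 p.2 * (Y p.1 p.2 ω - logisticFn (θ p.1 - β p.2)) := rfl
    rw [hXp, hmgfp, exp_Kfun]
  -- bound ψ(t) via the second-derivative bound
  have hψ : (∑ p ∈ obsF N J z, Kfun (θ p.1 - β p.2) (t * a p.1 p.2)) ≤ B * t ^ 2 / 2 := by
    refine taylor_quad_bound ht
      (f := fun u => ∑ p ∈ obsF N J z, Kfun (θ p.1 - β p.2) (u * a p.1 p.2))
      (g := fun u => ∑ p ∈ obsF N J z, a p.1 p.2 *
        (logisticFn (θ p.1 - β p.2 + u * a p.1 p.2) - logisticFn (θ p.1 - β p.2)))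
      (h := fun u => ∑ p ∈ obsF N J z,
        a p.1 p.2 ^ 2 * varFn (θ p.1 - β p.2 + u * a p.1 p.2)) ?_ ?_ ?_ ?_ hB
    · intro u
      exact HasDerivAt.fun_sum fun (p : ℕ × ℕ) _ => hasDerivAt_Kfun (θ p.1 - β p.2) (a p.1 p.2) u
    · intro u
      exact HasDerivAt.fun_sum fun (p : ℕ × ℕ) _ => hasDerivAt_Kfun' (θ p.1 - β p.2) (a p.1 p.2) u
    · exact Finset.sum_eq_zero fun p _ => by rw [zero_mul, Kfun_zero]
    · exact Finset.sum_eq_zero fun p _ => by rw [zero_mul, add_zero, sub_self, mul_zero]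
  -- combine
  have hfinal : (μ {ω | ε ≤ (∑ p ∈ obsF N J z, X p) ω}).toReal
      ≤ Real.exp (-t * ε + B * t ^ 2 / 2) := by
    calc (μ {ω | ε ≤ (∑ p ∈ obsF N J z, X p) ω}).toReal
        ≤ Real.exp (-t * ε) * mgf (∑ p ∈ obsF N J z, X p) μ t := key
      _ = Real.exp (-t * ε) * Real.exp (∑ p ∈ obsF N J z,
            Kfun (θ p.1 - β p.2) (t * a p.1 p.2)) := by rw [hmgf]
      _ ≤ Real.exp (-t * ε) * Real.exp (B * t ^ 2 / 2) := by
          exact mul_le_mul_of_nonneg_left (Real.exp_le_exp.mpr hψ) (Real.exp_pos _).le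
      _ = Real.exp (-t * ε + B * t ^ 2 / 2) := (Real.exp_add _ _).symm
  have hset : {ω | ε ≤ ∑ p ∈ obsF N J z,
      a p.1 p.2 * (Y p.1 p.2 ω - logisticFn (θ p.1 - β p.2))}
      = {ω | ε ≤ (∑ p ∈ obsF N J z, X p) ω} := by
    ext ω
    simp only [Set.mem_setOf_eq, Finset.sum_apply, hX]
  rw [hset]
  calc μ {ω | ε ≤ (∑ p ∈ obsF N J z, X p) ω}
      = ENNReal.ofReal ((μ {ω | ε ≤ (∑ p ∈ obsF N J z, X p) ω}).toReal) :=
        (ENNReal.ofReal_toReal (measure_ne_top μ _)).symm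
    _ ≤ ENNReal.ofReal (Real.exp (-t * ε + B * t ^ 2 / 2)) := ENNReal.ofReal_le_ofReal hfinal

end AuxLemmas5

noncomputable section AuxLemmas6

lemma normSig_smul (N J : ℕ) (z : ℕ → ℕ → Bool) (s : ℕ → ℕ → ℝ) (t : ℝ)
    (x : ℕ → ℕ → ℝ) :
    normSig N J z s (fun i j => t * x i j) = |t| * normSig N J z s x := by
  rw [normSig, normSig, ipSig_smul_left, ipSig_smul_right]
  have h : t * (t * ipSig N J z s x x) = t ^ 2 * ipSig N J z s x x := by ring
  rw [h, Real.sqrt_mul (sq_nonneg t), Real.sqrt_sq_eq_abs]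

end AuxLemmas6


/-- **Lemma 2.** Let `A` be a finite nonempty set of nonzero linear functionals on `Ω_N`
with cardinality `C_N`. If `f_N > 0`, `d_N ≥ 0` satisfy (a) `f_N²/log C_N → ∞`, (b) the
contraction bound for `U_N(y,v)`, and (c) `d_N f_N → 0`, then
`P(‖R_N‖_σ(A) < f_N/2) → 1`. -/
theorem residual_norm_probability_bound
    {Ω' : Type*} [MeasurableSpace Ω'] (μ : Measure Ω') [IsProbabilityMeasure μ]
    (Jn : ℕ → ℕ) (z : ℕ → ℕ → ℕ → Bool) (θs βs : ℕ → ℕ → ℝ) (Y : ℕ → ℕ → ℕ → Ω' → ℝ)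
    (hsum : ∀ N : ℕ, (∑ i ∈ Finset.range N, θs N i) = 0)
    (hmodel : BernModel μ Jn θs βs Y)
    (A : ℕ → Set (ℕ → ℕ → ℝ))
    (hAfin : ∀ N, (A N).Finite) (hAne : ∀ N, (A N).Nonempty)
    (hAnz : ∀ N, ∀ w ∈ A N, ∃ x ∈ OmegaSp N (Jn N) (z N), applyW N (Jn N) (z N) w x ≠ 0)
    (R : ℕ → Ω' → ℕ → ℕ → ℝ)
    (hR : ∀ N ω, IsR N (Jn N) (z N) (sigMat (θs N) (βs N))
      (fun i j => logisticFn (θs N i - βs N j)) (fun i j => Y N i j ω) (R N ω))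
    (f d : ℕ → ℝ) (hf : ∀ N, 0 < f N) (hd : ∀ N, 0 ≤ d N)
    (ha : Tendsto (fun N : ℕ => f N ^ 2 / Real.log ((A N).ncard)) atTop atTop)
    (hb : ∃ n : ℕ, ∀ N > n,
      ∀ y ∈ OmegaSp N (Jn N) (z N), ∀ v ∈ OmegaSp N (Jn N) (z N),
        normOn N (Jn N) (z N) (sigMat (θs N) (βs N)) (A N)
            (fun i j => y i j - (θs N i - βs N j)) ≤ f N →
        ∀ U, IsU N (Jn N) (z N) (sigMat (θs N) (βs N)) y v U →
          normOn N (Jn N) (z N) (sigMat (θs N) (βs N)) (A N) U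
            ≤ d N
              * normOn N (Jn N) (z N) (sigMat (θs N) (βs N)) (A N)
                  (fun i j => y i j - (θs N i - βs N j))
              * normOn N (Jn N) (z N) (sigMat (θs N) (βs N)) (A N) v)
    (hdf : Tendsto (fun N : ℕ => d N * f N) atTop (nhds 0)) :
    Tendsto
      (fun N : ℕ => μ {ω |
        normOn N (Jn N) (z N) (sigMat (θs N) (βs N)) (A N) (R N ω) < f N / 2})
      atTop (nhds 1) := by
  classical
  obtain ⟨n₀, hb⟩ := hb
  obtain ⟨hYmeas, hYval, hYprob, hYind⟩ := hmodel
  set good : ℕ → Set Ω' := fun N => {ω |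
    normOn N (Jn N) (z N) (sigMat (θs N) (βs N)) (A N) (R N ω) < f N / 2} with hgood
  -- ### Per-N bound on the bad event
  have key : ∀ N, n₀ < N → d N * f N ≤ 2 →
      μ (good N)ᶜ
        ≤ ENNReal.ofReal ((((A N).ncard : ℝ)) * (2 * Real.exp (-(f N)^2/64))) := by
    intro N hn hdf2
    have hsp : ∀ i j, 0 < sigMat (θs N) (βs N) i j := fun i j => varFn_pos _
    have mΩ : (fun i j => θs N i - βs N j) ∈ OmegaSp N (Jn N) (z N) :=
      ⟨θs N, βs N, hsum N, fun i _ j _ _ => rfl⟩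
    -- representers
    have hrep : ∀ w ∈ A N, ∃ a ∈ OmegaSp N (Jn N) (z N),
        ∀ x ∈ OmegaSp N (Jn N) (z N),
          ipSig N (Jn N) (z N) (sigMat (θs N) (βs N)) x a
            = applyW N (Jn N) (z N) w x := by
      intro w _
      obtain ⟨a, haΩ, hals⟩ := riesz_exists N (Jn N) (z N) (sigMat (θs N) (βs N)) w hsp
      refine ⟨a, haΩ, fun x hx => (hals x hx).trans ?_⟩
      rw [applyW]
      refine Finset.sum_congr rfl fun i _ => Finset.sum_congr rfl fun j _ => ?_
      by_cases h : z N i j = true <;> simp [h, mul_comm]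
    have habs_all : ∀ w ∈ A N, ∀ x ∈ OmegaSp N (Jn N) (z N),
        |applyW N (Jn N) (z N) w x|
          ≤ normSig N (Jn N) (z N) (sigMat (θs N) (βs N)) x
              * sigOf N (Jn N) (z N) (sigMat (θs N) (βs N)) w := by
      intro w hw
      obtain ⟨a, haΩ, hr⟩ := hrep w hw
      exact abs_applyW_le N (Jn N) (z N) _ hsp w a haΩ hr
    -- tail bound for each functional in A N
    have tailw : ∀ w ∈ A N,
        μ {ω | f N / 4 * sigOf N (Jn N) (z N) (sigMat (θs N) (βs N)) w
            < |applyW N (Jn N) (z N) w (R N ω)|}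
          ≤ ENNReal.ofReal (Real.exp (-(f N)^2/64))
            + ENNReal.ofReal (Real.exp (-(f N)^2/64)) := by
      intro w hw
      obtain ⟨a, haΩ, hr⟩ := hrep w hw
      set σg := normSig N (Jn N) (z N) (sigMat (θs N) (βs N)) a with hσg
      have hsig : sigOf N (Jn N) (z N) (sigMat (θs N) (βs N)) w = σg :=
        sigOf_eq_normSig N (Jn N) (z N) _ hsp w a haΩ hr
      have hσnn : (0:ℝ) ≤ σg := normSig_nonneg _ _ _ _ _
      have hσpos : 0 < σg := by
        rcases hσnn.lt_or_eq with h | h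
        · exact h
        · exfalso
          obtain ⟨x, hxΩ, hx0⟩ := hAnz N w hw
          have hle := habs_all w hw x hxΩ
          rw [hsig, ← h, mul_zero] at hle
          exact hx0 (abs_eq_zero.mp (le_antisymm hle (abs_nonneg _)))
      -- one-sided Chernoff bound, applied to `a` and `-a`
      have onesided : ∀ a' ∈ OmegaSp N (Jn N) (z N),
          ipSig N (Jn N) (z N) (sigMat (θs N) (βs N)) a' a' = σg ^ 2 →
          (∀ U ∈ OmegaSp N (Jn N) (z N),
            |ipSig N (Jn N) (z N) (sigMat (θs N) (βs N)) a' U|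
              ≤ |applyW N (Jn N) (z N) w U|) →
          μ {ω | σg * f N / 4 ≤ ∑ p ∈ obsF N (Jn N) (z N),
              a' p.1 p.2 * (Y N p.1 p.2 ω - logisticFn (θs N p.1 - βs N p.2))}
            ≤ ENNReal.ofReal (Real.exp (-(f N)^2/64)) := by
        intro a' ha'Ω ha'ip ha'U
        have hna' : normSig N (Jn N) (z N) (sigMat (θs N) (βs N)) a' = σg := by
          rw [normSig, ha'ip, Real.sqrt_sq hσnn]
        set T := f N / (4 * σg) with hT
        have hTpos : 0 < T := div_pos (hf N) (by positivity)
        set B := σg ^ 2 * (1 + d N * f N / 4) with hB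
        have hBbound : ∀ u ∈ Set.Icc (0:ℝ) T,
            (∑ p ∈ obsF N (Jn N) (z N),
              a' p.1 p.2 ^ 2 * varFn (θs N p.1 - βs N p.2 + u * a' p.1 p.2)) ≤ B := by
          intro u hu
          set y : ℕ → ℕ → ℝ := fun i j => (θs N i - βs N j) + u * a' i j with hy
          have hyΩ : y ∈ OmegaSp N (Jn N) (z N) := addsmul_mem_OmegaSp u mΩ ha'Ω
          have hud : (fun i j => y i j - (θs N i - βs N j))
              = fun i j => u * a' i j := by
            funext i j
            show ((θs N i - βs N j) + u * a' i j) - (θs N i - βs N j) = u * a' i j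
            ring
          have huσ : u * σg ≤ f N / 4 := by
            calc u * σg ≤ T * σg := mul_le_mul_of_nonneg_right hu.2 hσnn
              _ = f N / 4 := by rw [hT]; field_simp
          have hsm : normSig N (Jn N) (z N) (sigMat (θs N) (βs N))
              (fun i j => u * a' i j) = u * σg := by
            rw [normSig_smul, hna', abs_of_nonneg hu.1]
          have hnormua : normOn N (Jn N) (z N) (sigMat (θs N) (βs N)) (A N)
              (fun i j => u * a' i j) ≤ u * σg := by
            refine normOn_le N (Jn N) (z N) _ (A N) _ (mul_nonneg hu.1 hσnn) ?_
            intro w' hw'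
            have := habs_all w' hw' _ (smul_mem_OmegaSp u ha'Ω)
            rwa [hsm] at this
          have hfn : normOn N (Jn N) (z N) (sigMat (θs N) (βs N)) (A N)
              (fun i j => y i j - (θs N i - βs N j)) ≤ f N := by
            rw [hud]
            refine hnormua.trans (huσ.trans ?_)
            linarith [hf N]
          obtain ⟨U, hUΩ, hUip⟩ := riesz_exists N (Jn N) (z N) (sigMat (θs N) (βs N))
            (fun i j => (varFn (y i j) - sigMat (θs N) (βs N) i j) * a' i j) hsp
          have hIsU : IsU N (Jn N) (z N) (sigMat (θs N) (βs N)) y a' U := by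
            refine ⟨hUΩ, fun x hx => (hUip x hx).trans ?_⟩
            refine Finset.sum_congr rfl fun i _ => Finset.sum_congr rfl fun j _ => ?_
            by_cases h : z N i j = true <;> simp [h, mul_assoc]
          have hbU := hb N hn y hyΩ a' ha'Ω hfn U hIsU
          rw [hud] at hbU
          have hnorma' : normOn N (Jn N) (z N) (sigMat (θs N) (βs N)) (A N) a' ≤ σg := by
            refine normOn_le N (Jn N) (z N) _ (A N) _ hσnn ?_
            intro w' hw'
            have := habs_all w' hw' a' ha'Ω
            rwa [hna'] at this
          have hUbound : normOn N (Jn N) (z N) (sigMat (θs N) (βs N)) (A N) U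
              ≤ d N * (u * σg) * σg := by
            refine hbU.trans ?_
            have h1 : d N * normOn N (Jn N) (z N) (sigMat (θs N) (βs N)) (A N)
                (fun i j => u * a' i j) ≤ d N * (u * σg) :=
              mul_le_mul_of_nonneg_left hnormua (hd N)
            have h2 := mul_le_mul h1 hnorma' (normOn_nonneg _ _ _ _ _ _)
              (mul_nonneg (hd N) (mul_nonneg hu.1 hσnn))
            exact h2
          have hipU : |ipSig N (Jn N) (z N) (sigMat (θs N) (βs N)) a' U|
              ≤ (d N * (u * σg) * σg) * σg := by
            calc |ipSig N (Jn N) (z N) (sigMat (θs N) (βs N)) a' U|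
                ≤ |applyW N (Jn N) (z N) w U| := ha'U U hUΩ
              _ ≤ normOn N (Jn N) (z N) (sigMat (θs N) (βs N)) (A N) U
                    * sigOf N (Jn N) (z N) (sigMat (θs N) (βs N)) w := by
                  refine normOn_bound N (Jn N) (z N) _ (A N) U
                    (normSig_nonneg N (Jn N) (z N) (sigMat (θs N) (βs N)) U)
                    (fun w' hw' => habs_all w' hw' U hUΩ) w hw
              _ = normOn N (Jn N) (z N) (sigMat (θs N) (βs N)) (A N) U * σg := by
                  rw [hsig]
              _ ≤ (d N * (u * σg) * σg) * σg :=
                  mul_le_mul_of_nonneg_right hUbound hσnn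
          have hexpand : (∑ p ∈ obsF N (Jn N) (z N),
              a' p.1 p.2 ^ 2 * varFn (θs N p.1 - βs N p.2 + u * a' p.1 p.2))
              = ipSig N (Jn N) (z N) (sigMat (θs N) (βs N)) a' a'
                + ipSig N (Jn N) (z N) (sigMat (θs N) (βs N)) a' U := by
            have h1 : ipSig N (Jn N) (z N) (sigMat (θs N) (βs N)) a' U
                = ∑ p ∈ obsF N (Jn N) (z N),
                    a' p.1 p.2 * ((varFn (y p.1 p.2) - sigMat (θs N) (βs N) p.1 p.2)
                      * a' p.1 p.2) := by
              rw [hUip a' ha'Ω]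
              exact sum_ite_obsF N (Jn N) (z N) _
            rw [ipSig_eq_sum_obsF, h1, ← Finset.sum_add_distrib]
            refine Finset.sum_congr rfl fun p _ => ?_
            have hyv : y p.1 p.2 = θs N p.1 - βs N p.2 + u * a' p.1 p.2 := rfl
            have hsv : sigMat (θs N) (βs N) p.1 p.2
                = varFn (θs N p.1 - βs N p.2) := rfl
            rw [hyv, hsv]
            ring
          rw [hexpand, ha'ip, hB]
          have hipU' : ipSig N (Jn N) (z N) (sigMat (θs N) (βs N)) a' U
              ≤ d N * (f N / 4) * σg ^ 2 := by
            have h3 := (le_abs_self _).trans hipU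
            have h4 : d N * (u * σg) * σg * σg ≤ d N * (f N / 4) * σg ^ 2 := by
              have := mul_le_mul_of_nonneg_left huσ (hd N)
              nlinarith [hσnn, hd N]
            linarith
          nlinarith [sq_nonneg σg]
        -- apply the Chernoff bound
        have hch := chernoff_tail μ N (Jn N) (z N) (θs N) (βs N) (Y N) (hYmeas N)
          (fun i j ω => hYval N i j ω)
          (fun i hi j hj _ => hYprob N i hi j hj)
          (hYind N) a' T (σg * f N / 4) B hTpos.le hBbound
        refine hch.trans (ENNReal.ofReal_le_ofReal (Real.exp_le_exp.mpr ?_))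
        have h1 : T * (σg * f N / 4) = f N ^ 2 / 16 := by
          rw [hT]; field_simp; ring
        have h2 : B * T ^ 2 / 2 = (1 + d N * f N / 4) * f N ^ 2 / 32 := by
          rw [hB, hT]; field_simp; ring
        have h3 : d N * f N * f N ^ 2 ≤ 2 * f N ^ 2 :=
          mul_le_mul_of_nonneg_right hdf2 (sq_nonneg (f N))
        nlinarith [h3]
      -- apply to a and -a
      have hplus := onesided a haΩ (normSig_sq N (Jn N) (z N) _ a hsp).symm
        (fun U hU => le_of_eq (by rw [ipSig_comm, hr U hU]))
      have hminus := onesided (fun i j => -a i j) (neg_mem_OmegaSp haΩ)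
        (by
          have hneg : (fun i j => -a i j) = fun i j => (-1 : ℝ) * a i j := by
            funext i j; ring
          rw [hneg, ipSig_smul_left, ipSig_smul_right,
            normSig_sq N (Jn N) (z N) _ a hsp]
          ring)
        (fun U hU => by
          have hneg : (fun i j => -a i j) = fun i j => (-1 : ℝ) * a i j := by
            funext i j; ring
          rw [hneg, ipSig_smul_left, abs_mul, abs_neg, abs_one, one_mul,
            ipSig_comm, hr U hU])
      -- event inclusion
      refine le_trans (measure_mono ?_)
        (le_trans (measure_union_le _ _) (add_le_add hplus hminus))
      intro ω hω
      simp only [Set.mem_setOf_eq] at hω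
      have hRmem := (hR N ω).1
      have hval' : applyW N (Jn N) (z N) w (R N ω)
          = ∑ p ∈ obsF N (Jn N) (z N), a p.1 p.2
              * (Y N p.1 p.2 ω - logisticFn (θs N p.1 - βs N p.2)) := by
        rw [← hr (R N ω) hRmem, ipSig_comm, (hR N ω).2 a haΩ]
        exact sum_ite_obsF N (Jn N) (z N) _
      rw [hsig, hval'] at hω
      set S := ∑ p ∈ obsF N (Jn N) (z N), a p.1 p.2
          * (Y N p.1 p.2 ω - logisticFn (θs N p.1 - βs N p.2)) with hS
      have hSneg : (∑ p ∈ obsF N (Jn N) (z N), (fun i j => -a i j) p.1 p.2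
          * (Y N p.1 p.2 ω - logisticFn (θs N p.1 - βs N p.2))) = -S := by
        rw [hS, ← Finset.sum_neg_distrib]
        exact Finset.sum_congr rfl fun p _ => by ring
      rcases le_or_gt 0 S with hpos | hneg
      · left
        show σg * f N / 4 ≤ S
        rw [abs_of_nonneg hpos] at hω
        calc σg * f N / 4 = f N / 4 * σg := by ring
          _ ≤ S := hω.le
      · right
        show σg * f N / 4 ≤ ∑ p ∈ obsF N (Jn N) (z N), (fun i j => -a i j) p.1 p.2
            * (Y N p.1 p.2 ω - logisticFn (θs N p.1 - βs N p.2))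
        rw [hSneg]
        rw [abs_of_neg hneg] at hω
        calc σg * f N / 4 = f N / 4 * σg := by ring
          _ ≤ -S := hω.le
    -- union bound
    have hcompl : (good N)ᶜ ⊆ ⋃ w ∈ (hAfin N).toFinset,
        {ω | f N / 4 * sigOf N (Jn N) (z N) (sigMat (θs N) (βs N)) w
          < |applyW N (Jn N) (z N) w (R N ω)|} := by
      intro ω hω
      simp only [Set.mem_compl_iff, hgood, Set.mem_setOf_eq, not_lt] at hω
      by_contra hcon
      simp only [Set.mem_iUnion, Set.mem_setOf_eq, not_exists, not_lt] at hcon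
      have hle : normOn N (Jn N) (z N) (sigMat (θs N) (βs N)) (A N) (R N ω)
          ≤ f N / 4 := by
        refine normOn_le N (Jn N) (z N) _ (A N) _ (by linarith [hf N]) ?_
        intro w hw
        exact hcon w ((hAfin N).mem_toFinset.mpr hw)
      linarith [hf N]
    calc μ (good N)ᶜ ≤ μ (⋃ w ∈ (hAfin N).toFinset,
          {ω | f N / 4 * sigOf N (Jn N) (z N) (sigMat (θs N) (βs N)) w
            < |applyW N (Jn N) (z N) w (R N ω)|}) := measure_mono hcompl
      _ ≤ ∑ w ∈ (hAfin N).toFinset,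
            μ {ω | f N / 4 * sigOf N (Jn N) (z N) (sigMat (θs N) (βs N)) w
              < |applyW N (Jn N) (z N) w (R N ω)|} := measure_biUnion_finset_le _ _
      _ ≤ ∑ _w ∈ (hAfin N).toFinset,
            (ENNReal.ofReal (Real.exp (-(f N)^2/64))
              + ENNReal.ofReal (Real.exp (-(f N)^2/64))) :=
          Finset.sum_le_sum fun w hw => tailw w ((hAfin N).mem_toFinset.mp hw)
      _ = ENNReal.ofReal ((((A N).ncard : ℝ)) * (2 * Real.exp (-(f N)^2/64))) := by
          rw [Finset.sum_const, ← ENNReal.ofReal_add (Real.exp_nonneg _) (Real.exp_nonneg _),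
            nsmul_eq_mul]
          rw [Set.ncard_eq_toFinset_card (A N) (hAfin N)]
          rw [← ENNReal.ofReal_natCast ((hAfin N).toFinset.card),
            ← ENNReal.ofReal_mul (Nat.cast_nonneg _)]
          congr 1
          ring
  -- ### Asymptotics
  have hC1 : ∀ N, 1 ≤ (A N).ncard := fun N =>
    (Set.ncard_pos (hAfin N)).mpr (hAne N)
  have hlogC : ∀ N, 0 ≤ Real.log ((A N).ncard) := fun N =>
    Real.log_nonneg (by exact_mod_cast hC1 N)
  -- eventually log C_N ≤ f_N²/128
  have heve1 : ∀ᶠ N in atTop, Real.log ((A N).ncard) ≤ f N ^ 2 / 128 := by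
    filter_upwards [ha.eventually_ge_atTop 128] with N hN
    rcases (hlogC N).lt_or_eq with hpos | hzero
    · rw [le_div_iff₀ hpos] at hN
      linarith
    · rw [← hzero]
      positivity
  -- f_N² → ∞
  have hf2 : Tendsto (fun N => f N ^ 2) atTop atTop := by
    rw [tendsto_atTop]
    intro K
    have hK : ∀ᶠ N in atTop,
        max (max K 0 / Real.log 2) 1 ≤ f N ^ 2 / Real.log ((A N).ncard) :=
      ha.eventually_ge_atTop _
    filter_upwards [hK] with N hN
    have hlog2pos : (0:ℝ) < Real.log 2 := Real.log_pos (by norm_num)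
    have hC2 : 2 ≤ (A N).ncard := by
      by_contra hc
      push_neg at hc
      have h1 : (A N).ncard = 1 := by have := hC1 N; omega
      rw [h1] at hN
      simp only [Nat.cast_one, Real.log_one, div_zero] at hN
      have := le_max_right (max K 0 / Real.log 2) (1:ℝ)
      linarith
    have hlogC2 : Real.log 2 ≤ Real.log ((A N).ncard) :=
      Real.log_le_log (by norm_num) (by exact_mod_cast hC2)
    have hlogpos : (0:ℝ) < Real.log ((A N).ncard) := lt_of_lt_of_le hlog2pos hlogC2
    have hstep : max K 0 / Real.log 2 ≤ f N ^ 2 / Real.log ((A N).ncard) :=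
      le_trans (le_max_left _ _) hN
    have ha0 : 0 ≤ max K 0 / Real.log 2 := div_nonneg (le_max_right K 0) hlog2pos.le
    have h2 : max K 0 / Real.log 2 * Real.log 2
        ≤ f N ^ 2 / Real.log ((A N).ncard) * Real.log ((A N).ncard) := by
      calc max K 0 / Real.log 2 * Real.log 2
          ≤ max K 0 / Real.log 2 * Real.log ((A N).ncard) :=
            mul_le_mul_of_nonneg_left hlogC2 ha0
        _ ≤ f N ^ 2 / Real.log ((A N).ncard) * Real.log ((A N).ncard) :=
            mul_le_mul_of_nonneg_right hstep hlogpos.le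
    rw [div_mul_cancel₀ _ hlog2pos.ne', div_mul_cancel₀ _ hlogpos.ne'] at h2
    calc K ≤ max K 0 := le_max_left _ _
      _ ≤ f N ^ 2 := h2
  -- exp(-f²/128) → 0
  have hexp : Tendsto (fun N => Real.exp (-(f N ^ 2) / 128)) atTop (nhds 0) := by
    apply Real.tendsto_exp_atBot.comp
    have h1 : Tendsto (fun N => f N ^ 2 / 128) atTop atTop :=
      Tendsto.atTop_div_const (by norm_num) hf2
    have heq : (fun N => -(f N ^ 2) / 128) = fun N => -(f N ^ 2 / 128) := by
      funext N; ring
    rw [heq]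
    exact tendsto_neg_atBot_iff.mpr h1
  -- the real upper bound sequence tends to 0
  set r : ℕ → ℝ := fun N => ((A N).ncard : ℝ) * (2 * Real.exp (-(f N)^2/64)) with hrdef
  have hrle : ∀ᶠ N in atTop, r N ≤ 2 * Real.exp (-(f N ^ 2) / 128) := by
    filter_upwards [heve1] with N hN
    have hCpos : (0:ℝ) < ((A N).ncard : ℝ) := by exact_mod_cast hC1 N
    have hCexp : ((A N).ncard : ℝ) = Real.exp (Real.log ((A N).ncard)) :=
      (Real.exp_log hCpos).symm
    show ((A N).ncard : ℝ) * (2 * Real.exp (-(f N)^2/64))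
      ≤ 2 * Real.exp (-(f N ^ 2) / 128)
    calc ((A N).ncard : ℝ) * (2 * Real.exp (-(f N)^2/64))
        = 2 * Real.exp (Real.log ((A N).ncard) + (-(f N)^2/64)) := by
          rw [Real.exp_add, ← hCexp]; ring
      _ ≤ 2 * Real.exp (-(f N ^ 2) / 128) := by
          have hle : Real.log ((A N).ncard) + (-(f N)^2/64) ≤ -(f N ^ 2) / 128 := by
            linarith
          exact mul_le_mul_of_nonneg_left (Real.exp_le_exp.mpr hle) (by norm_num)
  have hr0 : Tendsto r atTop (nhds 0) := by
    have hub : Tendsto (fun N => 2 * Real.exp (-(f N ^ 2) / 128)) atTop (nhds 0) := by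
      have h2 := hexp.const_mul (2:ℝ)
      simpa using h2
    refine tendsto_of_tendsto_of_tendsto_of_le_of_le' tendsto_const_nhds hub ?_ hrle
    filter_upwards with N
    show (0:ℝ) ≤ ((A N).ncard : ℝ) * (2 * Real.exp (-(f N)^2/64))
    positivity
  -- μ of bad events tends to 0
  have hbad : Tendsto (fun N => μ (good N)ᶜ) atTop (nhds 0) := by
    have hub : Tendsto (fun N => ENNReal.ofReal (r N)) atTop (nhds 0) := by
      have h2 := ENNReal.tendsto_ofReal hr0
      simpa using h2
    refine tendsto_of_tendsto_of_tendsto_of_le_of_le' tendsto_const_nhds hub ?_ ?_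
    · filter_upwards with N
      exact zero_le
    · have hdfle : ∀ᶠ N in atTop, d N * f N ≤ 2 :=
        hdf.eventually_le_const (by norm_num)
      filter_upwards [hdfle, eventually_gt_atTop n₀] with N h1 h2
      exact key N h2 h1
  -- conclude
  have hlower : ∀ N, 1 - μ (good N)ᶜ ≤ μ (good N) := by
    intro N
    have huniv : (1 : ENNReal) ≤ μ (good N) + μ (good N)ᶜ := by
      have h3 := measure_union_le (μ := μ) (good N) (good N)ᶜ
      rwa [Set.union_compl_self, measure_univ] at h3
    exact tsub_le_iff_right.mpr huniv
  have hlow : Tendsto (fun N => 1 - μ (good N)ᶜ) atTop (nhds 1) := by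
    have h4 := ENNReal.Tendsto.sub (tendsto_const_nhds (x := (1 : ENNReal))) hbad
      (Or.inl ENNReal.one_ne_top)
    simpa using h4
  show Tendsto (fun N => μ (good N)) atTop (nhds 1)
  exact tendsto_of_tendsto_of_tendsto_of_le_of_le hlow tendsto_const_nhds
    (fun N => hlower N) (fun N => prob_le_one)
end
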